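/- Let V be a finite set, E a family of subsets of V, and R a random subset of V where each element is included independently. Let X = Σ_{A∈E} 1[A ⊆ R]. Then for every ε ∈ (0,1], P(X ≤ (1-ε)E[X]) ≤ exp(−(εE[X])²/(2(E[X] + Σ_{(A,B): A≠B, A∩B≠∅} E[1[A⊆R]·1[B⊆R]]))). -/

import Mathlib

set_option linter.unusedSectionVars false
set_option maxHeartbeats 1000000

open MeasureTheory ProbabilityTheory Finset

namespace JansonAux

variable {V : Type*} [Fintype V] [DecidableEq V]

def W (p : V → ℝ) (S : Finset V) : ℝ := ∏ v, if v ∈ S then p v else 1 - p v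

def cnt (𝓕 : Finset (Finset V)) (S : Finset V) : ℝ := ((𝓕.filter (fun B => B ⊆ S)).card : ℝ)

variable {p : V → ℝ}

lemma W_nonneg' (hp0 : ∀ v, 0 ≤ p v) (hp1 : ∀ v, p v ≤ 1) (S : Finset V) : 0 ≤ W p S := by
  refine Finset.prod_nonneg fun v _ => ?_
  by_cases h : v ∈ S <;> simp [h, hp0 v, sub_nonneg, hp1 v]

lemma W_eq (S : Finset V) : W p S = (∏ v ∈ S, p v) * ∏ v ∈ univ \ S, (1 - p v) := by
  rw [W, Finset.prod_ite]
  congr 1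
  · exact Finset.prod_congr (by simp) fun v _ => rfl
  · exact Finset.prod_congr (by ext v; simp) fun v _ => rfl

lemma sum_W' : ∑ S : Finset V, W p S = 1 := by
  have h := Finset.prod_add p (fun v => 1 - p v) (univ : Finset V)
  simp only [add_sub_cancel, Finset.prod_const_one, Finset.powerset_univ] at h
  rw [eq_comm] at h
  rw [← h]
  exact Finset.sum_congr rfl fun S _ => W_eq S

lemma W_mul_W' (S T : Finset V) : W p S * W p T = W p (S ∩ T) * W p (S ∪ T) := by
  rw [W, W, W, W, ← Finset.prod_mul_distrib, ← Finset.prod_mul_distrib]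
  refine Finset.prod_congr rfl fun v _ => ?_
  by_cases hS : v ∈ S <;> by_cases hT : v ∈ T <;> simp [hS, hT, mul_comm]

lemma factor' (A : Finset V) (g h : Finset V → ℝ)
    (hg : ∀ S, g S = g (S ∩ A)) (hh : ∀ S, h S = h (S \ A)) :
    (∑ S : Finset V, W p S * g S) * (∑ S : Finset V, W p S * h S)
      = ∑ S : Finset V, W p S * (g S * h S) := by
  classical
  have key : ∀ S T : Finset V,
      W p ((S ∩ A) ∪ (T \ A)) * W p ((T ∩ A) ∪ (S \ A)) = W p S * W p T := by
    intro S T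
    rw [W, W, W, W, ← Finset.prod_mul_distrib, ← Finset.prod_mul_distrib]
    refine Finset.prod_congr rfl fun v _ => ?_
    by_cases hA : v ∈ A <;> by_cases hS : v ∈ S <;> by_cases hT : v ∈ T <;>
      simp [hA, hS, hT, mul_comm]
  have lhs2 : (∑ S : Finset V, W p S * g S) * (∑ S : Finset V, W p S * h S)
      = ∑ x ∈ (univ ×ˢ univ : Finset (Finset V × Finset V)),
          W p x.1 * W p x.2 * (g (x.1 ∩ A) * h (x.2 \ A)) := by
    rw [Finset.sum_mul_sum, Finset.sum_product]
    refine Finset.sum_congr rfl fun S _ => Finset.sum_congr rfl fun T _ => ?_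
    rw [hg S, hh T]; ring
  have rhs2 : ∑ S : Finset V, W p S * (g S * h S)
      = ∑ x ∈ (univ ×ˢ univ : Finset (Finset V × Finset V)),
          W p x.1 * W p x.2 * (g (x.1 ∩ A) * h (x.1 \ A)) := by
    rw [Finset.sum_product]
    refine Finset.sum_congr rfl fun S _ => ?_
    calc W p S * (g S * h S) = W p S * (g (S ∩ A) * h (S \ A)) := by rw [← hg, ← hh]
      _ = (W p S * (g (S ∩ A) * h (S \ A))) * ∑ T : Finset V, W p T := by
          rw [sum_W', mul_one]
      _ = ∑ T : Finset V, W p S * W p T * (g (S ∩ A) * h (S \ A)) := by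
          rw [Finset.mul_sum]; exact Finset.sum_congr rfl fun T _ => by ring
  rw [lhs2, rhs2]
  refine Finset.sum_nbij' (fun x => (x.1 ∩ A ∪ x.2 \ A, x.2 ∩ A ∪ x.1 \ A))
    (fun x => (x.1 ∩ A ∪ x.2 \ A, x.2 ∩ A ∪ x.1 \ A)) (by simp) (by simp) ?_ ?_ ?_
  · rintro ⟨S, T⟩ _
    ext v <;> simp <;> tauto
  · rintro ⟨S, T⟩ _
    ext v <;> simp <;> tauto
  · rintro ⟨S, T⟩ _
    dsimp only
    have e1 : (S ∩ A ∪ T \ A) ∩ A = S ∩ A := by ext v; simp; tauto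
    have e2 : (S ∩ A ∪ T \ A) \ A = T \ A := by ext v; simp; tauto
    rw [key, e1, e2]

lemma fkg_antitone' (μ f g : Finset V → ℝ) (hμ0 : 0 ≤ μ) (hf0 : 0 ≤ f) (hg0 : 0 ≤ g)
    (hf : Antitone f) (hg : Antitone g)
    (hμ : ∀ a b : Finset V, μ a * μ b ≤ μ (a ∩ b) * μ (a ∪ b)) :
    (∑ a : Finset V, μ a * f a) * ∑ a : Finset V, μ a * g a ≤
      (∑ a : Finset V, μ a) * ∑ a : Finset V, μ a * (f a * g a) := by
  have := fkg (α := (Finset V)ᵒᵈ) (μ := fun a => μ (OrderDual.ofDual a))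
    (f := fun a => f (OrderDual.ofDual a)) (g := fun a => g (OrderDual.ofDual a))
    (fun a => hμ0 _) (fun a => hf0 _) (fun a => hg0 _)
    (fun a b hab => hf hab) (fun a b hab => hg hab)
    (fun a b => by
      have := hμ (OrderDual.ofDual a) (OrderDual.ofDual b)
      simpa [mul_comm] using this)
  exact this

lemma cnt_nonneg' (𝓕 : Finset (Finset V)) (S : Finset V) : 0 ≤ cnt 𝓕 S := Nat.cast_nonneg _

lemma cnt_mono' (𝓕 : Finset (Finset V)) : Monotone (cnt 𝓕) := by
  intro S T hST
  unfold cnt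
  have : (𝓕.filter (fun B => B ⊆ S)) ⊆ 𝓕.filter (fun B => B ⊆ T) := by
    intro B hB
    simp only [Finset.mem_filter] at hB ⊢
    exact ⟨hB.1, hB.2.trans hST⟩
  exact_mod_cast Finset.card_le_card this

lemma cnt_le' (𝓕 : Finset (Finset V)) (S : Finset V) : cnt 𝓕 S ≤ (𝓕.card : ℝ) := by
  unfold cnt
  exact_mod_cast Finset.card_le_card (Finset.filter_subset _ _)

lemma cnt_split' (A : Finset V) (𝓔 : Finset (Finset V)) (S : Finset V) :
    cnt 𝓔 S = cnt (𝓔.filter fun B => ¬ Disjoint A B) S + cnt (𝓔.filter fun B => Disjoint A B) S := by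
  unfold cnt
  rw [Finset.filter_comm, Finset.filter_comm (fun B => Disjoint A B)]
  rw [← Nat.cast_add]
  norm_cast
  have := Finset.card_filter_add_card_filter_not
    (s := 𝓔.filter (fun B => B ⊆ S)) (p := fun B => ¬ Disjoint A B)
  simp only [not_not] at this
  omega

lemma cnt_sdiff' (A : Finset V) (𝓔 : Finset (Finset V)) (S : Finset V) :
    cnt (𝓔.filter fun B => Disjoint A B) S = cnt (𝓔.filter fun B => Disjoint A B) (S \ A) := by
  unfold cnt
  congr 1
  rw [Finset.filter_filter, Finset.filter_filter]
  refine congrArg _ (Finset.filter_congr fun B hB => ?_)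
  constructor
  · rintro ⟨hd, hs⟩; exact ⟨hd, Finset.subset_sdiff.2 ⟨hs, hd.symm⟩⟩
  · rintro ⟨hd, hs⟩; exact ⟨hd, hs.trans (Finset.sdiff_subset)⟩

lemma per_A' (hp0 : ∀ v, 0 ≤ p v) (hp1 : ∀ v, p v ≤ 1)
    (t : ℝ) (ht : 0 ≤ t) (A : Finset V) (𝓔 : Finset (Finset V)) :
    ((∑ S : Finset V, W p S * (if A ⊆ S then (1:ℝ) else 0))
      - t * ∑ S : Finset V, W p S * ((if A ⊆ S then (1:ℝ) else 0)
          * cnt (𝓔.filter fun B => ¬ Disjoint A B) S))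
      * (∑ S : Finset V, W p S * Real.exp (-t * cnt 𝓔 S))
    ≤ ∑ S : Finset V, W p S * ((if A ⊆ S then (1:ℝ) else 0) * Real.exp (-t * cnt 𝓔 S)) := by
  classical
  set 𝓔₁ := 𝓔.filter fun B => ¬ Disjoint A B with h𝓔₁
  set 𝓔₂ := 𝓔.filter fun B => Disjoint A B with h𝓔₂
  set ι : Finset V → ℝ := fun S => if A ⊆ S then (1:ℝ) else 0 with hι
  set ν : Finset V → ℝ := fun S => W p S * ι S with hν
  have hι0 : ∀ S, 0 ≤ ι S := fun S => by by_cases h : A ⊆ S <;> simp [hι, h]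
  have hι1 : ∀ S, ι S ≤ 1 := fun S => by by_cases h : A ⊆ S <;> simp [hι, h]
  have hν0 : ∀ S, 0 ≤ ν S := fun S => mul_nonneg (W_nonneg' hp0 hp1 S) (hι0 S)
  set P : ℝ := ∑ S : Finset V, W p S * ι S with hP
  set M : ℝ := ∑ S : Finset V, W p S * (ι S * cnt 𝓔₁ S) with hM
  set ψ : ℝ := ∑ S : Finset V, W p S * Real.exp (-t * cnt 𝓔 S) with hψ
  set c : ℝ := ∑ S : Finset V, W p S * (ι S * Real.exp (-t * cnt 𝓔 S)) with hc
  set a : ℝ := ∑ S : Finset V, (W p S * ι S) * Real.exp (-t * cnt 𝓔₁ S) with ha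
  set b : ℝ := ∑ S : Finset V, (W p S * ι S) * Real.exp (-t * cnt 𝓔₂ S) with hb
  -- FKG
  have hexp_anti : ∀ 𝓕 : Finset (Finset V), Antitone fun S => Real.exp (-t * cnt 𝓕 S) := by
    intro 𝓕 S T hST
    exact Real.exp_le_exp.2 (by nlinarith [cnt_mono' 𝓕 hST])
  have hνlog : ∀ S T : Finset V, ν S * ν T ≤ ν (S ∩ T) * ν (S ∪ T) := by
    intro S T
    by_cases hS : A ⊆ S
    · by_cases hT : A ⊆ T
      · have h1 : A ⊆ S ∩ T := Finset.subset_inter hS hT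
        have h2 : A ⊆ S ∪ T := hS.trans Finset.subset_union_left
        simp only [hν, hι, hS, hT, h1, h2, if_pos, mul_one]
        exact le_of_eq (W_mul_W' S T)
      · have : ν S * ν T = 0 := by simp [hν, hι, hT]
        rw [show (W p S * if A ⊆ S then (1:ℝ) else 0) * (W p T * if A ⊆ T then (1:ℝ) else 0) = ν S * ν T from rfl, this]
        exact mul_nonneg (hν0 _) (hν0 _)
    · have : ν S * ν T = 0 := by simp [hν, hι, hS]
      rw [show (W p S * if A ⊆ S then (1:ℝ) else 0) * (W p T * if A ⊆ T then (1:ℝ) else 0) = ν S * ν T from rfl, this]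
      exact mul_nonneg (hν0 _) (hν0 _)
  have hfkg : a * b ≤ P * c := by
    have := fkg_antitone' ν (fun S => Real.exp (-t * cnt 𝓔₁ S))
      (fun S => Real.exp (-t * cnt 𝓔₂ S)) hν0
      (fun S => (Real.exp_pos _).le) (fun S => (Real.exp_pos _).le)
      (hexp_anti 𝓔₁) (hexp_anti 𝓔₂) hνlog
    have e1 : ∀ S : Finset V,
        ν S * (Real.exp (-t * cnt 𝓔₁ S) * Real.exp (-t * cnt 𝓔₂ S))
          = W p S * (ι S * Real.exp (-t * cnt 𝓔 S)) := by
      intro S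
      rw [← Real.exp_add, cnt_split' A 𝓔 S]
      ring_nf
      rfl
    calc a * b = (∑ S : Finset V, ν S * Real.exp (-t * cnt 𝓔₁ S))
          * ∑ S : Finset V, ν S * Real.exp (-t * cnt 𝓔₂ S) := rfl
      _ ≤ (∑ S : Finset V, ν S) * ∑ S : Finset V,
            ν S * (Real.exp (-t * cnt 𝓔₁ S) * Real.exp (-t * cnt 𝓔₂ S)) := this
      _ = P * c := by
          rw [hP, hc]
          congr 1
          exact Finset.sum_congr rfl fun S _ => e1 S
  -- factorization
  have hbfac : b = P * ∑ S : Finset V, W p S * Real.exp (-t * cnt 𝓔₂ S) := by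
    rw [hb, hP]
    have := factor' (p := p) A ι (fun S => Real.exp (-t * cnt 𝓔₂ S))
      (fun S => by
        by_cases h : A ⊆ S
        · have : A ⊆ S ∩ A := Finset.subset_inter h Finset.Subset.rfl
          simp [hι, h, this]
        · have : ¬ A ⊆ S ∩ A := fun hh => h (hh.trans Finset.inter_subset_left)
          simp [hι, h, this])
      (fun S => by rw [h𝓔₂]; exact congrArg (fun x => Real.exp (-t * x)) (cnt_sdiff' A 𝓔 S))
    calc (∑ S : Finset V, W p S * ι S * Real.exp (-t * cnt 𝓔₂ S))
        = ∑ S : Finset V, W p S * (ι S * Real.exp (-t * cnt 𝓔₂ S)) :=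
          Finset.sum_congr rfl fun S _ => by ring
      _ = (∑ S : Finset V, W p S * ι S) * ∑ S : Finset V, W p S * Real.exp (-t * cnt 𝓔₂ S) := by
          rw [this]
  -- remaining pieces
  have hψZ : ψ ≤ ∑ S : Finset V, W p S * Real.exp (-t * cnt 𝓔₂ S) := by
    refine Finset.sum_le_sum fun S _ => ?_
    refine mul_le_mul_of_nonneg_left ?_ (W_nonneg' hp0 hp1 S)
    refine Real.exp_le_exp.2 ?_
    have h1 := cnt_split' A 𝓔 S
    have h2 := cnt_nonneg' 𝓔₁ S
    rw [← h𝓔₁, ← h𝓔₂] at h1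
    nlinarith
  have hψ0 : 0 ≤ ψ := Finset.sum_nonneg fun S _ =>
    mul_nonneg (W_nonneg' hp0 hp1 S) (Real.exp_pos _).le
  have hc0 : 0 ≤ c := Finset.sum_nonneg fun S _ =>
    mul_nonneg (W_nonneg' hp0 hp1 S) (mul_nonneg (hι0 S) (Real.exp_pos _).le)
  have hM0 : 0 ≤ M := Finset.sum_nonneg fun S _ =>
    mul_nonneg (W_nonneg' hp0 hp1 S) (mul_nonneg (hι0 S) (cnt_nonneg' _ S))
  have ha_lb : P - t * M ≤ a := by
    have : P - t * M = ∑ S : Finset V,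
        (W p S * ι S - t * (W p S * (ι S * cnt 𝓔₁ S))) := by
      rw [Finset.sum_sub_distrib, ← Finset.mul_sum]
    rw [this, ha]
    refine Finset.sum_le_sum fun S _ => ?_
    have he : 1 + (-t * cnt 𝓔₁ S) ≤ Real.exp (-t * cnt 𝓔₁ S) := by
      have := Real.add_one_le_exp (-t * cnt 𝓔₁ S)
      linarith
    have hw : 0 ≤ W p S * ι S := hν0 S
    nlinarith [hw, he]
  rcases le_or_gt (P - t * M) 0 with hr | hr
  · calc (P - t * M) * ψ ≤ 0 := mul_nonpos_of_nonpos_of_nonneg hr hψ0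
      _ ≤ c := hc0
  · have hP0 : 0 < P := by nlinarith [hM0, ht]
    have ha0 : 0 ≤ a := le_trans hr.le ha_lb
    have hbb : P * ψ ≤ b := by
      rw [hbfac]
      exact mul_le_mul_of_nonneg_left hψZ hP0.le
    have h1 : (P - t * M) * (P * ψ) ≤ a * b :=
      mul_le_mul ha_lb hbb (mul_nonneg hP0.le hψ0) ha0
    have h2 : (P - t * M) * (P * ψ) ≤ P * c := h1.trans hfkg
    have h3 : P * ((P - t * M) * ψ) ≤ P * c := by nlinarith [h2]
    exact le_of_mul_le_mul_left h3 hP0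

lemma cnt_eq_sum (𝓕 : Finset (Finset V)) (S : Finset V) :
    cnt 𝓕 S = ∑ B ∈ 𝓕, (if B ⊆ S then (1:ℝ) else 0) := by
  unfold cnt
  rw [Finset.card_filter]
  push_cast
  rfl

lemma core' (hp0 : ∀ v, 0 ≤ p v) (hp1 : ∀ v, p v ≤ 1)
    (𝓔 : Finset (Finset V)) (t : ℝ) (ht : 0 ≤ t) :
    ((∑ S : Finset V, W p S * cnt 𝓔 S)
      - t * ((∑ S : Finset V, W p S * cnt 𝓔 S)
        + ∑ A ∈ 𝓔, ∑ B ∈ 𝓔, if A ≠ B ∧ ¬ Disjoint A B then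
            (∑ S : Finset V, W p S * (if A ⊆ S ∧ B ⊆ S then (1:ℝ) else 0)) else 0))
      * (∑ S : Finset V, W p S * Real.exp (-t * cnt 𝓔 S))
    ≤ ∑ S : Finset V, W p S * (cnt 𝓔 S * Real.exp (-t * cnt 𝓔 S)) := by
  classical
  set μ : ℝ := ∑ S : Finset V, W p S * cnt 𝓔 S with hμ
  set ψ : ℝ := ∑ S : Finset V, W p S * Real.exp (-t * cnt 𝓔 S) with hψ
  set Δ : ℝ := ∑ A ∈ 𝓔, ∑ B ∈ 𝓔, if A ≠ B ∧ ¬ Disjoint A B then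
      (∑ S : Finset V, W p S * (if A ⊆ S ∧ B ⊆ S then (1:ℝ) else 0)) else 0 with hΔ
  set P : Finset V → ℝ := fun A => ∑ S : Finset V, W p S * (if A ⊆ S then (1:ℝ) else 0) with hP
  set M : Finset V → ℝ := fun A => ∑ S : Finset V, W p S * ((if A ⊆ S then (1:ℝ) else 0)
      * cnt (𝓔.filter fun B => ¬ Disjoint A B) S) with hM
  set q : Finset V → Finset V → ℝ := fun A B =>
      ∑ S : Finset V, W p S * (if A ⊆ S ∧ B ⊆ S then (1:ℝ) else 0) with hq
  have hq0 : ∀ A B, 0 ≤ q A B := fun A B => Finset.sum_nonneg fun S _ =>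
    mul_nonneg (W_nonneg' hp0 hp1 S) (by positivity)
  have hψ0 : 0 ≤ ψ := Finset.sum_nonneg fun S _ =>
    mul_nonneg (W_nonneg' hp0 hp1 S) (Real.exp_pos _).le
  -- μ = ∑ P A
  have hμP : μ = ∑ A ∈ 𝓔, P A := by
    rw [hμ]
    have h1 : ∀ S : Finset V, W p S * cnt 𝓔 S
        = ∑ A ∈ 𝓔, W p S * (if A ⊆ S then (1:ℝ) else 0) := fun S => by
      rw [cnt_eq_sum, Finset.mul_sum]
    rw [Finset.sum_congr rfl fun S _ => h1 S, Finset.sum_comm]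
  -- RHS swap
  have hRHS : ∑ S : Finset V, W p S * (cnt 𝓔 S * Real.exp (-t * cnt 𝓔 S))
      = ∑ A ∈ 𝓔, ∑ S : Finset V,
          W p S * ((if A ⊆ S then (1:ℝ) else 0) * Real.exp (-t * cnt 𝓔 S)) := by
    have h1 : ∀ S : Finset V, W p S * (cnt 𝓔 S * Real.exp (-t * cnt 𝓔 S))
        = ∑ A ∈ 𝓔, W p S * ((if A ⊆ S then (1:ℝ) else 0) * Real.exp (-t * cnt 𝓔 S)) := by
      intro S
      set e := Real.exp (-t * cnt 𝓔 S) with he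
      rw [cnt_eq_sum, Finset.sum_mul, Finset.mul_sum]
    rw [Finset.sum_congr rfl fun S _ => h1 S, Finset.sum_comm]
  -- M A ≤ P A + Δ_A
  have hMA : ∀ A ∈ 𝓔, M A ≤ P A + ∑ B ∈ 𝓔, (if A ≠ B ∧ ¬ Disjoint A B then q A B else 0) := by
    intro A _
    have hMsum : M A = ∑ B ∈ 𝓔.filter (fun B => ¬ Disjoint A B), q A B := by
      simp only [hM, hq]
      have h1 : ∀ S : Finset V, W p S * ((if A ⊆ S then (1:ℝ) else 0)
          * cnt (𝓔.filter fun B => ¬ Disjoint A B) S)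
          = ∑ B ∈ 𝓔.filter (fun B => ¬ Disjoint A B),
              W p S * (if A ⊆ S ∧ B ⊆ S then (1:ℝ) else 0) := by
        intro S
        rw [cnt_eq_sum, Finset.mul_sum, Finset.mul_sum]
        refine Finset.sum_congr rfl fun B _ => ?_
        by_cases hA : A ⊆ S <;> by_cases hB : B ⊆ S <;> simp [hA, hB]
        
      rw [Finset.sum_congr rfl fun S _ => h1 S, Finset.sum_comm]
    rw [hMsum]
    have hsub : 𝓔.filter (fun B => ¬ Disjoint A B)
        ⊆ insert A ((𝓔.filter (fun B => ¬ Disjoint A B)).erase A) := by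
      intro B hB
      by_cases h : B = A
      · simp [h]
      · exact Finset.mem_insert_of_mem (Finset.mem_erase.2 ⟨h, hB⟩)
    calc ∑ B ∈ 𝓔.filter (fun B => ¬ Disjoint A B), q A B
        ≤ ∑ B ∈ insert A ((𝓔.filter (fun B => ¬ Disjoint A B)).erase A), q A B :=
          Finset.sum_le_sum_of_subset_of_nonneg hsub (fun B _ _ => hq0 A B)
      _ = q A A + ∑ B ∈ (𝓔.filter (fun B => ¬ Disjoint A B)).erase A, q A B := by
          rw [Finset.sum_insert (Finset.notMem_erase A _)]
      _ ≤ P A + ∑ B ∈ 𝓔, (if A ≠ B ∧ ¬ Disjoint A B then q A B else 0) := by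
          gcongr
          · simp only [hq, hP]
            refine le_of_eq (Finset.sum_congr rfl fun S _ => ?_)
            by_cases h : A ⊆ S <;> simp [h]
          · have herase : (𝓔.filter (fun B => ¬ Disjoint A B)).erase A
                = 𝓔.filter (fun B => A ≠ B ∧ ¬ Disjoint A B) := by
              ext B
              simp only [Finset.mem_erase, Finset.mem_filter]
              tauto
            rw [herase, Finset.sum_filter]
  -- combine
  have hper : ∀ A ∈ 𝓔, (P A - t * M A) * ψ
      ≤ ∑ S : Finset V, W p S * ((if A ⊆ S then (1:ℝ) else 0) * Real.exp (-t * cnt 𝓔 S)) :=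
    fun A _ => per_A' hp0 hp1 t ht A 𝓔
  have hsumper : (∑ A ∈ 𝓔, (P A - t * M A)) * ψ
      ≤ ∑ S : Finset V, W p S * (cnt 𝓔 S * Real.exp (-t * cnt 𝓔 S)) := by
    rw [hRHS, Finset.sum_mul]
    exact Finset.sum_le_sum hper
  refine le_trans ?_ hsumper
  refine mul_le_mul_of_nonneg_right ?_ hψ0
  rw [Finset.sum_sub_distrib, ← Finset.mul_sum, ← hμP]
  have hMsum : ∑ A ∈ 𝓔, M A ≤ μ + Δ := by
    rw [hμP, hΔ, ← Finset.sum_add_distrib]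
    exact Finset.sum_le_sum hMA
  nlinarith [hMsum, ht]

lemma psi_le' (hp0 : ∀ v, 0 ≤ p v) (hp1 : ∀ v, p v ≤ 1)
    (𝓔 : Finset (Finset V)) (T : ℝ) (hT : 0 ≤ T) :
    ∑ S : Finset V, W p S * Real.exp (-T * cnt 𝓔 S)
      ≤ Real.exp (-(∑ S : Finset V, W p S * cnt 𝓔 S) * T
          + ((∑ S : Finset V, W p S * cnt 𝓔 S)
            + ∑ A ∈ 𝓔, ∑ B ∈ 𝓔, if A ≠ B ∧ ¬ Disjoint A B then
              (∑ S : Finset V, W p S * (if A ⊆ S ∧ B ⊆ S then (1:ℝ) else 0)) else 0) / 2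
            * T ^ 2) := by
  classical
  set μ : ℝ := ∑ S : Finset V, W p S * cnt 𝓔 S with hμ
  set Δ : ℝ := ∑ A ∈ 𝓔, ∑ B ∈ 𝓔, if A ≠ B ∧ ¬ Disjoint A B then
      (∑ S : Finset V, W p S * (if A ⊆ S ∧ B ⊆ S then (1:ℝ) else 0)) else 0 with hΔ
  set ψ : ℝ → ℝ := fun t => ∑ S : Finset V, W p S * Real.exp (-t * cnt 𝓔 S) with hψ
  have hψpos : ∀ t, 0 < ψ t := by
    intro t
    have h1 : Real.exp (-|t| * (𝓔.card : ℝ)) ≤ ψ t := by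
      have : Real.exp (-|t| * (𝓔.card : ℝ))
          = ∑ S : Finset V, W p S * Real.exp (-|t| * (𝓔.card : ℝ)) := by
        rw [← Finset.sum_mul, sum_W', one_mul]
      rw [this]
      refine Finset.sum_le_sum fun S _ => ?_
      refine mul_le_mul_of_nonneg_left (Real.exp_le_exp.2 ?_) (W_nonneg' hp0 hp1 S)
      have h2 := cnt_nonneg' 𝓔 S
      have h3 := cnt_le' 𝓔 S
      rcases abs_cases t with ⟨h, _⟩ | ⟨h, _⟩ <;> nlinarith
    exact lt_of_lt_of_le (Real.exp_pos _) h1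
  have hψderiv : ∀ t, HasDerivAt ψ
      (-∑ S : Finset V, W p S * (cnt 𝓔 S * Real.exp (-t * cnt 𝓔 S))) t := by
    intro t
    have : HasDerivAt ψ
        (∑ S : Finset V, W p S * (Real.exp (-t * cnt 𝓔 S) * (-cnt 𝓔 S))) t := by
      refine HasDerivAt.fun_sum fun S _ => ?_
      have h := (((hasDerivAt_id t).neg.mul_const (cnt 𝓔 S)).exp).const_mul (W p S)
      convert h using 2
      case e'_4 => rfl
      all_goals simp
    convert this using 1
    rw [← Finset.sum_neg_distrib]
    exact Finset.sum_congr rfl fun S _ => by ring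
  set F : ℝ → ℝ := fun t => Real.log (ψ t) + μ * t - (μ + Δ) / 2 * t ^ 2 with hF
  have hFderiv : ∀ t, HasDerivAt F
      ((-∑ S : Finset V, W p S * (cnt 𝓔 S * Real.exp (-t * cnt 𝓔 S))) / ψ t
        + μ - (μ + Δ) * t) t := by
    intro t
    have h1 := ((hψderiv t).log (hψpos t).ne')
    have h2 := ((hasDerivAt_pow 2 t).const_mul ((μ + Δ) / 2))
    have h3 := (h1.add ((hasDerivAt_id t).const_mul μ)).sub h2
    convert h3 using 1
    case e'_9 =>
      push_cast
      ring
    all_goals rfl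
  have hF0 : F 0 = 0 := by
    have : ψ 0 = 1 := by
      rw [hψ]
      simp only [neg_zero, zero_mul, Real.exp_zero, mul_one]
      exact sum_W'
    simp [hF, this]
  have hanti : AntitoneOn F (Set.Ici 0) := by
    refine antitoneOn_of_deriv_nonpos (convex_Ici 0) ?_ ?_ ?_
    · exact (Continuous.continuousOn (by
        have : Differentiable ℝ F := fun t => (hFderiv t).differentiableAt
        exact this.continuous))
    · intro x hx
      exact (hFderiv x).differentiableAt.differentiableWithinAt
    · intro x hx
      rw [interior_Ici] at hx
      rw [(hFderiv x).deriv]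
      have hcore := core' hp0 hp1 𝓔 x (le_of_lt hx)
      rw [← hμ, ← hΔ] at hcore
      have hp := hψpos x
      have hcore2 : (μ - x * (μ + Δ)) * ψ x
          ≤ ∑ S : Finset V, W p S * (cnt 𝓔 S * Real.exp (-x * cnt 𝓔 S)) := hcore
      have h1 : (-∑ S : Finset V, W p S * (cnt 𝓔 S * Real.exp (-x * cnt 𝓔 S))) / ψ x
          ≤ -(μ - x * (μ + Δ)) := by
        rw [div_le_iff₀ hp]
        nlinarith [hcore2]
      linarith [h1]
  have hle : F T ≤ 0 := hF0 ▸ hanti Set.self_mem_Ici (Set.mem_Ici.2 hT) hT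
  have : Real.log (ψ T) ≤ -μ * T + (μ + Δ) / 2 * T ^ 2 := by
    rw [hF] at hle
    simp only at hle
    linarith
  calc ψ T = Real.exp (Real.log (ψ T)) := (Real.exp_log (hψpos T)).symm
    _ ≤ Real.exp (-μ * T + (μ + Δ) / 2 * T ^ 2) := Real.exp_le_exp.2 this

theorem janson_finite (hp0 : ∀ v, 0 ≤ p v) (hp1 : ∀ v, p v ≤ 1)
    (𝓔 : Finset (Finset V)) (ε : ℝ) (hε : 0 < ε) (hε1 : ε ≤ 1) :
    ∑ S ∈ univ.filter (fun S : Finset V =>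
        cnt 𝓔 S ≤ (1 - ε) * ∑ S : Finset V, W p S * cnt 𝓔 S), W p S
      ≤ Real.exp (-(ε * ∑ S : Finset V, W p S * cnt 𝓔 S) ^ 2 /
          (2 * ((∑ S : Finset V, W p S * cnt 𝓔 S)
            + ∑ A ∈ 𝓔, ∑ B ∈ 𝓔, if A ≠ B ∧ ¬ Disjoint A B then
              (∑ S : Finset V, W p S * (if A ⊆ S ∧ B ⊆ S then (1:ℝ) else 0)) else 0))) := by
  classical
  set μ : ℝ := ∑ S : Finset V, W p S * cnt 𝓔 S with hμ
  set Δ : ℝ := ∑ A ∈ 𝓔, ∑ B ∈ 𝓔, if A ≠ B ∧ ¬ Disjoint A B then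
      (∑ S : Finset V, W p S * (if A ⊆ S ∧ B ⊆ S then (1:ℝ) else 0)) else 0 with hΔ
  have hμ0 : 0 ≤ μ := Finset.sum_nonneg fun S _ =>
    mul_nonneg (W_nonneg' hp0 hp1 S) (cnt_nonneg' 𝓔 S)
  have hΔ0 : 0 ≤ Δ := Finset.sum_nonneg fun A _ => Finset.sum_nonneg fun B _ => by
    split
    · exact Finset.sum_nonneg fun S _ => mul_nonneg (W_nonneg' hp0 hp1 S) (by positivity)
    · exact le_rfl
  have hLHS1 : ∑ S ∈ univ.filter (fun S : Finset V => cnt 𝓔 S ≤ (1 - ε) * μ), W p S ≤ 1 := by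
    rw [← sum_W' (p := p)]
    exact Finset.sum_le_sum_of_subset_of_nonneg (Finset.filter_subset _ _)
      (fun S _ _ => W_nonneg' hp0 hp1 S)
  rcases eq_or_lt_of_le hμ0 with hμz | hμpos
  · have : -(ε * μ) ^ 2 / (2 * (μ + Δ)) = 0 := by
      rw [← hμz]
      simp
    rw [this, Real.exp_zero]
    exact hLHS1
  · have hD : 0 < μ + Δ := by linarith
    set T : ℝ := ε * μ / (μ + Δ) with hT
    have hT0 : 0 ≤ T := by positivity
    set c : ℝ := (1 - ε) * μ with hc
    have h1 : (∑ S ∈ univ.filter (fun S : Finset V => cnt 𝓔 S ≤ c), W p S)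
        * Real.exp (-T * c) ≤ ∑ S : Finset V, W p S * Real.exp (-T * cnt 𝓔 S) := by
      rw [Finset.sum_mul]
      refine le_trans (Finset.sum_le_sum fun S hS => ?_)
        (Finset.sum_le_sum_of_subset_of_nonneg (Finset.filter_subset _ _)
          (fun S _ _ => mul_nonneg (W_nonneg' hp0 hp1 S) (Real.exp_pos _).le))
      have hcnt : cnt 𝓔 S ≤ c := (Finset.mem_filter.1 hS).2
      refine mul_le_mul_of_nonneg_left (Real.exp_le_exp.2 ?_) (W_nonneg' hp0 hp1 S)
      nlinarith
    have h2 : ∑ S ∈ univ.filter (fun S : Finset V => cnt 𝓔 S ≤ c), W p S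
        ≤ (∑ S : Finset V, W p S * Real.exp (-T * cnt 𝓔 S)) * Real.exp (T * c) := by
      have hepos : (0:ℝ) < Real.exp (-T * c) := Real.exp_pos _
      have := (le_div_iff₀ hepos).2 h1
      rw [neg_mul, Real.exp_neg, div_inv_eq_mul] at this
      exact this
    have h3 := psi_le' hp0 hp1 𝓔 T hT0
    rw [← hμ, ← hΔ] at h3
    have h4 : ∑ S ∈ univ.filter (fun S : Finset V => cnt 𝓔 S ≤ c), W p S
        ≤ Real.exp (-μ * T + (μ + Δ) / 2 * T ^ 2) * Real.exp (T * c) := by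
      refine h2.trans (mul_le_mul_of_nonneg_right h3 (Real.exp_pos _).le)
    refine h4.trans (le_of_eq ?_)
    rw [← Real.exp_add]
    congr 1
    rw [hT, hc]
    field_simp
    ring


variable {Ω : Type*} [MeasureSpace Ω] [IsProbabilityMeasure (ℙ : Measure Ω)]
  (R : Ω → Finset V)

lemma meas_eq' (hmeas : ∀ v : V, MeasurableSet {ω | v ∈ R ω})
    (hindep : iIndepSet (fun v : V => {ω | v ∈ R ω}) ℙ) (S : Finset V) :
    ℙ {ω | R ω = S}
      = ∏ v : V, (if v ∈ S then ℙ {ω | v ∈ R ω} else 1 - ℙ {ω | v ∈ R ω}) := by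
  classical
  have hset : {ω | R ω = S} = ⋂ v : V,
      (if v ∈ S then {ω | v ∈ R ω} else {ω | v ∈ R ω}ᶜ) := by
    ext ω
    simp only [Set.mem_setOf_eq, Set.mem_iInter]
    constructor
    · intro h v
      by_cases hv : v ∈ S <;> simp [hv, h] <;> simp [Set.mem_setOf_eq, h, hv]
    · intro h
      ext v
      have := h v
      by_cases hv : v ∈ S <;> simp [hv] at this <;> simp [hv, this]
  rw [hset]
  have hind : iIndep (fun v : V => MeasurableSpace.generateFrom {{ω | v ∈ R ω}}) ℙ := hindep
  rw [hind.meas_iInter (fun v => ?_)]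
  · refine Finset.prod_congr rfl fun v _ => ?_
    by_cases hv : v ∈ S
    · simp [hv]
    · simp only [hv, if_false]
      rw [measure_compl (hmeas v) (measure_ne_top _ _), measure_univ]
  · by_cases hv : v ∈ S
    · simp only [hv, if_true]
      exact MeasurableSpace.measurableSet_generateFrom (Set.mem_singleton _)
    · simp only [hv, if_false]
      exact (MeasurableSpace.measurableSet_generateFrom (Set.mem_singleton _)).compl

lemma measurable_eq_set (hmeas : ∀ v : V, MeasurableSet {ω | v ∈ R ω}) (S : Finset V) :
    MeasurableSet {ω | R ω = S} := by
  have hset : {ω | R ω = S} = ⋂ v : V,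
      (if v ∈ S then {ω | v ∈ R ω} else {ω | v ∈ R ω}ᶜ) := by
    ext ω
    simp only [Set.mem_setOf_eq, Set.mem_iInter]
    constructor
    · intro h v
      by_cases hv : v ∈ S <;> simp [hv, h] <;> simp [Set.mem_setOf_eq, h, hv]
    · intro h
      ext v
      have := h v
      by_cases hv : v ∈ S <;> simp [hv] at this <;> simp [hv, this]
  rw [hset]
  refine MeasurableSet.iInter fun v => ?_
  by_cases hv : v ∈ S <;> simp only [hv, if_true, if_false]
  · exact hmeas v
  · exact (hmeas v).compl

lemma meas_toReal (hmeas : ∀ v : V, MeasurableSet {ω | v ∈ R ω})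
    (hindep : iIndepSet (fun v : V => {ω | v ∈ R ω}) ℙ) (S : Finset V) :
    (ℙ {ω | R ω = S}).toReal = W (fun v => (ℙ {ω | v ∈ R ω}).toReal) S := by
  rw [meas_eq' R hmeas hindep S, ENNReal.toReal_prod]
  refine Finset.prod_congr rfl fun v _ => ?_
  by_cases hv : v ∈ S
  · simp [hv]
  · simp only [hv, if_false, W]
    rw [ENNReal.toReal_sub_of_le prob_le_one (by simp)]
    simp

lemma meas_mem_toReal (hmeas : ∀ v : V, MeasurableSet {ω | v ∈ R ω})
    (hindep : iIndepSet (fun v : V => {ω | v ∈ R ω}) ℙ) (𝒮 : Finset (Finset V)) :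
    (ℙ {ω | R ω ∈ 𝒮}).toReal = ∑ S ∈ 𝒮, W (fun v => (ℙ {ω | v ∈ R ω}).toReal) S := by
  have hset : {ω | R ω ∈ 𝒮} = ⋃ S ∈ 𝒮, {ω | R ω = S} := by
    ext ω; simp
  rw [hset, measure_biUnion_finset ?_ (fun S _ => measurable_eq_set R hmeas S)]
  · rw [ENNReal.toReal_sum (fun S _ => measure_ne_top _ _)]
    exact Finset.sum_congr rfl fun S _ => meas_toReal R hmeas hindep S
  · intro S _ T hT hST
    simp only [Function.onFun]
    refine Set.disjoint_left.2 fun ω h1 h2 => ?_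
    exact hST (h1.symm.trans h2)

lemma integral_comp (hmeas : ∀ v : V, MeasurableSet {ω | v ∈ R ω})
    (hindep : iIndepSet (fun v : V => {ω | v ∈ R ω}) ℙ) (f : Finset V → ℝ) :
    ∫ ω, f (R ω) = ∑ S : Finset V, W (fun v => (ℙ {ω | v ∈ R ω}).toReal) S * f S := by
  have h1 : ∀ ω, f (R ω)
      = ∑ S : Finset V, Set.indicator {ω | R ω = S} (fun _ => f S) ω := by
    intro ω
    rw [Finset.sum_eq_single (R ω)]
    · simp [Set.indicator_apply]
    · intro S _ hS
      simp [Set.indicator_apply, Set.mem_setOf_eq]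
      intro h; exact absurd h (by exact fun hh => hS hh.symm)  -- fix below maybe
    · simp
  have h2 : ∫ ω, f (R ω)
      = ∑ S : Finset V, ∫ ω, Set.indicator {ω | R ω = S} (fun _ => f S) ω := by
    rw [← integral_finset_sum]
    · exact integral_congr_ae (Filter.Eventually.of_forall h1)
    · intro S _
      exact (integrable_const (f S)).indicator (measurable_eq_set R hmeas S)
  rw [h2]
  refine Finset.sum_congr rfl fun S _ => ?_
  rw [integral_indicator_const (f S) (measurable_eq_set R hmeas S)]
  rw [measureReal_def, meas_toReal R hmeas hindep S, smul_eq_mul]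


end JansonAux

/-- Janson's inequality: `R` is a random subset of a finite set `V` with independent
    element inclusions, `𝓔` a family of subsets of `V`, `X = Σ_{A ∈ 𝓔} 1[A ⊆ R]`.
    Then for `0 < ε ≤ 1`,
    `P(X ≤ (1-ε)E[X]) ≤ exp(-(εE[X])² / (2(E[X] + Σ_{A≠B, A∩B≠∅} E[1[A⊆R]1[B⊆R]])))`. -/
theorem janson_inequality {Ω : Type*} [MeasureSpace Ω]
    [IsProbabilityMeasure (ℙ : Measure Ω)]
    {V : Type*} [Fintype V] [DecidableEq V]
    (R : Ω → Finset V)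
    (hmeas : ∀ v : V, MeasurableSet {ω | v ∈ R ω})
    (hindep : iIndepSet (fun v : V => {ω | v ∈ R ω}) ℙ)
    (𝓔 : Finset (Finset V))
    (X : Ω → ℝ) (hX : X = fun ω => ((𝓔.filter (fun A => A ⊆ R ω)).card : ℝ))
    (ε : ℝ) (hε : 0 < ε) (hε1 : ε ≤ 1) :
    (ℙ {ω | X ω ≤ (1 - ε) * ∫ ω, X ω}).toReal ≤
      Real.exp (-(ε * ∫ ω, X ω)^2 /
        (2 * ((∫ ω, X ω) +
          ∑ A ∈ 𝓔, ∑ B ∈ 𝓔,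
            if A ≠ B ∧ ¬ Disjoint A B then
              (ℙ {ω | A ⊆ R ω ∧ B ⊆ R ω}).toReal else 0))) := by
  classical
  set p : V → ℝ := fun v => (ℙ {ω | v ∈ R ω}).toReal with hp
  have hp0 : ∀ v, 0 ≤ p v := fun v => ENNReal.toReal_nonneg
  have hp1 : ∀ v, p v ≤ 1 := fun v => by
    have h1 : ℙ {ω | v ∈ R ω} ≤ 1 := prob_le_one
    calc p v ≤ (1 : ENNReal).toReal := ENNReal.toReal_mono (by simp) h1
      _ = 1 := by simp
  have hXc : ∀ ω, X ω = JansonAux.cnt 𝓔 (R ω) := fun ω => by rw [hX]; rfl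
  have hint : ∫ ω, X ω = ∑ S : Finset V, JansonAux.W p S * JansonAux.cnt 𝓔 S := by
    have : ∀ ω, X ω = (fun ω => JansonAux.cnt 𝓔 (R ω)) ω := hXc
    rw [integral_congr_ae (Filter.Eventually.of_forall this)]
    exact JansonAux.integral_comp R hmeas hindep (JansonAux.cnt 𝓔)
  have hq : ∀ A B : Finset V, (ℙ {ω | A ⊆ R ω ∧ B ⊆ R ω}).toReal
      = ∑ S : Finset V, JansonAux.W p S * (if A ⊆ S ∧ B ⊆ S then (1:ℝ) else 0) := by
    intro A B
    have hsetq : {ω | A ⊆ R ω ∧ B ⊆ R ω}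
        = {ω | R ω ∈ Finset.univ.filter (fun S : Finset V => A ⊆ S ∧ B ⊆ S)} := by
      ext ω; simp
    rw [hsetq, JansonAux.meas_mem_toReal R hmeas hindep, Finset.sum_filter]
    refine Finset.sum_congr rfl fun S _ => ?_
    by_cases h : A ⊆ S ∧ B ⊆ S <;> simp [h] <;> rfl
  have hset : {ω | X ω ≤ (1 - ε) * ∫ ω, X ω}
      = {ω | R ω ∈ Finset.univ.filter (fun S : Finset V =>
          JansonAux.cnt 𝓔 S ≤ (1 - ε) * ∑ S : Finset V, JansonAux.W p S * JansonAux.cnt 𝓔 S)} := by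
    ext ω
    simp only [Set.mem_setOf_eq, Finset.mem_filter, Finset.mem_univ, true_and, hXc ω, hint]
  rw [hset, JansonAux.meas_mem_toReal R hmeas hindep, hint]
  simp only [hq]
  exact JansonAux.janson_finite hp0 hp1 𝓔 ε hε hε1
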